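/- Convergence rate for approximate MD under relative smoothness: Let f be L-smooth and μ-strongly convex relative to Ψ with L > μ ≥ 0, (x̃_k) any sequence, and x_{k+1} = argmin_x{⟨x, ∇f(x̃_k)⟩ + L·B_Ψ(x, x̃_k)}. If the quantity L⟨∇Ψ(x_i) − ∇Ψ(x̃_i), x − x̃_i⟩ + ⟨∇f(x_i), x̃_i − x_i⟩ is bounded above by M for all 1 ≤ i ≤ k, then min_{1≤i≤k} f(x̃_i) − f(x) ≤ ((L−μ)/k)·B_Ψ(x, x̃₀) + M. -/

import Mathlib

open RealInnerProductSpace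

theorem approximate_md_relative_smooth_rate {n : ℕ}
    (𝒳 : Set (EuclideanSpace ℝ (Fin n))) (h𝒳 : Convex ℝ 𝒳)
    (h𝒳int : (interior 𝒳).Nonempty)
    (Ψ : EuclideanSpace ℝ (Fin n) → ℝ) (hΨdiff : Differentiable ℝ Ψ)
    (hΨconv : ConvexOn ℝ 𝒳 Ψ)
    (B : EuclideanSpace ℝ (Fin n) → EuclideanSpace ℝ (Fin n) → ℝ)
    (hB : ∀ x y, B x y = Ψ x - Ψ y - ⟪gradient Ψ y, x - y⟫)
    (f : EuclideanSpace ℝ (Fin n) → ℝ) (hfdiff : Differentiable ℝ f)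
    (L μ : ℝ) (hμ : 0 ≤ μ) (hLμ : μ < L)
    (hsmooth : ∀ x ∈ 𝒳, ∀ y ∈ 𝒳,
      f y ≤ f x + ⟪gradient f x, y - x⟫ + L * B y x)
    (hrelstrong : ∀ x ∈ 𝒳, ∀ y ∈ 𝒳,
      f y ≥ f x + ⟪gradient f x, y - x⟫ + μ * B y x)
    (xt xs : ℕ → EuclideanSpace ℝ (Fin n))
    (hxt : ∀ i, xt i ∈ 𝒳) (hxs : ∀ i, xs i ∈ interior 𝒳)
    (hiter : ∀ i, IsMinOn (fun x => ⟪x, gradient f (xt i)⟫ + L * B x (xt i)) 𝒳 (xs (i + 1)))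
    (x : EuclideanSpace ℝ (Fin n)) (hx : x ∈ 𝒳)
    (k : ℕ) (hk : 1 ≤ k) (M : ℝ)
    (hM : ∀ i ∈ Finset.Icc 1 k,
      L * ⟪gradient Ψ (xs i) - gradient Ψ (xt i), x - xt i⟫
        + ⟪gradient f (xs i), xt i - xs i⟫ ≤ M) :
    (Finset.Icc 1 k).inf' ⟨1, by simp [hk]⟩ (fun i => f (xt i) - f x)
      ≤ ((L - μ) / k) * B x (xt 0) + M := by
  -- First-order optimality at the interior minimizer
  have key : ∀ (j : ℕ) (v : EuclideanSpace ℝ (Fin n)),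
      ⟪gradient f (xt j), v⟫ + L * ⟪gradient Ψ (xs (j+1)) - gradient Ψ (xt j), v⟫ = 0 := by
    intro j v
    have hloc : IsLocalMin (fun y => ⟪y, gradient f (xt j)⟫ + L * B y (xt j)) (xs (j+1)) :=
      (hiter j).isLocalMin (mem_interior_iff_mem_nhds.mp (hxs (j+1)))
    have heq : (fun y => ⟪y, gradient f (xt j)⟫ + L * B y (xt j)) =
        fun y => ⟪gradient f (xt j), y⟫ +
          L * (Ψ y - Ψ (xt j) - (⟪gradient Ψ (xt j), y⟫ - ⟪gradient Ψ (xt j), xt j⟫)) := by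
      funext y
      rw [hB, real_inner_comm y (gradient f (xt j)), inner_sub_right]
    rw [heq] at hloc
    have hd1 : HasFDerivAt (fun y : EuclideanSpace ℝ (Fin n) => ⟪gradient f (xt j), y⟫)
        (innerSL ℝ (gradient f (xt j))) (xs (j+1)) :=
      (innerSL ℝ (gradient f (xt j))).hasFDerivAt
    have hd2 : HasFDerivAt Ψ (innerSL ℝ (gradient Ψ (xs (j+1)))) (xs (j+1)) := by
      have h := (hΨdiff (xs (j+1))).hasGradientAt.hasFDerivAt
      convert h using 1
      all_goals rfl
    have hd3 : HasFDerivAt (fun y : EuclideanSpace ℝ (Fin n) => ⟪gradient Ψ (xt j), y⟫)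
        (innerSL ℝ (gradient Ψ (xt j))) (xs (j+1)) :=
      (innerSL ℝ (gradient Ψ (xt j))).hasFDerivAt
    have hF : HasFDerivAt (fun y => ⟪gradient f (xt j), y⟫ +
          L * (Ψ y - Ψ (xt j) - (⟪gradient Ψ (xt j), y⟫ - ⟪gradient Ψ (xt j), xt j⟫)))
        (innerSL ℝ (gradient f (xt j)) +
          L • ((innerSL ℝ (gradient Ψ (xs (j+1)))) - (innerSL ℝ (gradient Ψ (xt j)))))
        (xs (j+1)) :=
      hd1.add (((hd2.sub_const (Ψ (xt j))).sub
        (hd3.sub_const ⟪gradient Ψ (xt j), xt j⟫)).const_mul L)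
    have h0 := hloc.hasFDerivAt_eq_zero hF
    have hv := congrFun (congrArg DFunLike.coe h0) v
    simp only [ContinuousLinearMap.add_apply, ContinuousLinearMap.coe_smul',
      Pi.smul_apply, ContinuousLinearMap.coe_sub', Pi.sub_apply, innerSL_apply_apply,
      ContinuousLinearMap.zero_apply, smul_eq_mul] at hv
    rw [inner_sub_left]
    linarith
  -- three point identity
  have h3 : ∀ u y z, B u y + B y z - B u z = ⟪gradient Ψ z - gradient Ψ y, u - y⟫ := by
    intro u y z
    simp only [hB, inner_sub_left, inner_sub_right]
    ring
  -- nonnegativity of B on 𝒳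
  have hBnn : ∀ u ∈ 𝒳, ∀ y ∈ 𝒳, 0 ≤ B u y := by
    intro u hu y hy
    have h1 := hsmooth y hy u hu
    have h2 := hrelstrong y hy u hu
    nlinarith
  -- per step inequality
  have step : ∀ j : ℕ, j + 1 ∈ Finset.Icc 1 k →
      f (xt (j+1)) - f x ≤ (L - μ) * B x (xt j) - L * B x (xt (j+1)) + M := by
    intro j hj
    have hsmem : xs (j+1) ∈ 𝒳 := interior_subset (hxs (j+1))
    have hA1 := hsmooth (xt j) (hxt j) (xs (j+1)) hsmem
    have hA2 := hrelstrong (xt j) (hxt j) x hx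
    have hkey := key j (x - xs (j+1))
    have h3a := h3 x (xs (j+1)) (xt j)
    have h3b := h3 x (xt (j+1)) (xs (j+1))
    have hA3 := hsmooth (xs (j+1)) hsmem (xt (j+1)) (hxt (j+1))
    have hMj := hM (j+1) hj
    have e1 : ⟪gradient f (xt j), xs (j+1) - xt j⟫ - ⟪gradient f (xt j), x - xt j⟫
        = -⟪gradient f (xt j), x - xs (j+1)⟫ := by
      simp only [inner_sub_right]; ring
    have e2 : ⟪gradient Ψ (xt j) - gradient Ψ (xs (j+1)), x - xs (j+1)⟫
        = -⟪gradient Ψ (xs (j+1)) - gradient Ψ (xt j), x - xs (j+1)⟫ := by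
      rw [← neg_sub, inner_neg_left]
    have h3a' : L * B x (xs (j+1)) + L * B (xs (j+1)) (xt j) - L * B x (xt j)
        = -(L * ⟪gradient Ψ (xs (j+1)) - gradient Ψ (xt j), x - xs (j+1)⟫) := by
      rw [e2] at h3a
      linear_combination L * h3a
    have h3b' : L * B x (xt (j+1)) + L * B (xt (j+1)) (xs (j+1)) - L * B x (xs (j+1))
        = L * ⟪gradient Ψ (xs (j+1)) - gradient Ψ (xt (j+1)), x - xt (j+1)⟫ := by
      linear_combination L * h3b
    linarith
  -- telescoping sum
  have sum_le : ∀ m : ℕ, m ≤ k →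
      (∑ i ∈ Finset.Icc 1 m, (f (xt i) - f x))
        ≤ (L - μ) * B x (xt 0) - (L - μ) * B x (xt m) + m * M := by
    intro m
    induction m with
    | zero => intro _; simp
    | succ m ih =>
      intro hmk
      have hm : m ≤ k := Nat.le_of_succ_le hmk
      have hsum := ih hm
      have hstep := step m (Finset.mem_Icc.mpr ⟨by omega, hmk⟩)
      have hBm1 : 0 ≤ B x (xt (m+1)) := hBnn x hx (xt (m+1)) (hxt (m+1))
      rw [Finset.sum_Icc_succ_top (by omega : 1 ≤ m + 1)]
      push_cast
      nlinarith
  have hsum := sum_le k le_rfl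
  -- min is at most the average
  set c := (Finset.Icc 1 k).inf' ⟨1, by simp [hk]⟩ (fun i => f (xt i) - f x) with hc
  have hcard : (Finset.Icc 1 k).card = k := by
    rw [Nat.card_Icc]; omega
  have hle : (k : ℝ) * c ≤ ∑ i ∈ Finset.Icc 1 k, (f (xt i) - f x) := by
    have := Finset.card_nsmul_le_sum (Finset.Icc 1 k) (fun i => f (xt i) - f x) c
      (fun i hi => Finset.inf'_le _ hi)
    rw [hcard] at this
    simpa [nsmul_eq_mul] using this
  have hB0 : 0 ≤ B x (xt k) := hBnn x hx (xt k) (hxt k)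
  have hkpos : (0 : ℝ) < k := by exact_mod_cast hk
  rw [div_mul_eq_mul_div, ← sub_le_iff_le_add, le_div_iff₀ hkpos]
  nlinarith
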